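/- arXiv:2508.10705 — 2 statements merged into one kernel-verified Lean document; each statement's English description precedes it below -/
import Mathlib

section
/- Let d, m ∈ ℕ, T > 0, and λ : [0,T] → ℝ be measurable with λ(t) ≥ 0. Let p₀ : ℝ^d × ℝ^m → ℝ be a measurable, strictly positive joint probability density (with respect to Lebesgue measure) of a pair (X₀, Y). For each t ∈ (0,T] let k_t : ℝ^d × ℝ^d → ℝ be a measurable, strictly positive transition density (for each x₀, x ↦ k_t(x,x₀) is a probability density), differentiable in its first argument, and define p_t(x,y) = ∫_{ℝ^d} k_t(x,x₀) p₀(x₀,y) dx₀; assume differentiation under the integral sign is valid, i.e. ∇_x p_t(x,y) = ∫ ∇_x k_t(x,x₀) p₀(x₀,y) dx₀ for all (x,y), and that all integrals below are finite. For a measurable function s : ℝ^d × ℝ^m × [0,T] → ℝ^d define the conditional score-matching loss L_CDE(s) = ∫_0^T λ(t) ∭ ‖∇_x log p_t(x,y) − s(x,y,t)‖² k_t(x,x₀) p₀(x₀,y) dx₀ dx dy dt and the denoising loss L_DSM(s) = ∫_0^T λ(t) ∭ ‖∇_x log k_t(x,x₀) − s(x,y,t)‖² k_t(x,x₀) p₀(x₀,y)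 dx₀ dx dy dt. Then the difference L_CDE(s) − L_DSM(s) is independent of s; in particular L_CDE(s) − L_DSM(s) = L_CDE(0) − L_DSM(0) for every such s with finite losses. -/
open MeasureTheory
open Set Metric Filter Topology Pointwise

noncomputable section


lemma fderiv_zero_ae_on_level {d : ℕ} (v : EuclideanSpace ℝ (Fin d) → ℝ)
    {E : Set (EuclideanSpace ℝ (Fin d))} (hE : MeasurableSet E)
    (hv0 : ∀ x ∈ E, v x = 0) :
    ∀ᵐ x, x ∈ E → DifferentiableAt ℝ v x → fderiv ℝ v x = 0 := by
  filter_upwards [Besicovitch.ae_tendsto_measure_inter_div_of_measurableSet volume hE]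
    with x hx hxE hdiff
  rw [indicator_of_mem hxE, Pi.one_apply] at hx
  by_contra hD0
  set D := fderiv ℝ v x with hDdef
  have hDnorm : (0:ℝ) < ‖D‖ := norm_pos_iff.mpr hD0
  set ε : ℝ := ‖D‖ / 2 with hεdef
  have hε : 0 < ε := by positivity
  -- find a direction where D is large
  have hex : ∃ h0, ε * ‖h0‖ < ‖D h0‖ := by
    by_contra hc
    push_neg at hc
    have : ‖D‖ ≤ ε := ContinuousLinearMap.opNorm_le_bound D hε.le
      (fun h => by simpa [mul_comm] using hc h)
    rw [hεdef] at this; linarith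
  obtain ⟨h0, hh0⟩ := hex
  have hex' : ∃ h1, ε * ‖h1‖ < D h1 := by
    rcases le_or_gt 0 (D h0) with h | h
    · exact ⟨h0, by rwa [Real.norm_eq_abs, abs_of_nonneg h] at hh0⟩
    · refine ⟨-h0, ?_⟩
      rw [norm_neg, map_neg]
      rwa [Real.norm_eq_abs, abs_of_neg h] at hh0
  obtain ⟨h1, hh1⟩ := hex'
  have hh1ne : h1 ≠ 0 := by
    intro h; rw [h] at hh1; simp at hh1
  -- the cone
  set C : Set (EuclideanSpace ℝ (Fin d)) := {h | ε * ‖h‖ < D h} with hCdef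
  have hCopen : IsOpen C := isOpen_lt (continuous_const.mul continuous_norm) D.continuous
  have hCsmul : ∀ r : ℝ, 0 < r → ∀ h ∈ C, r • h ∈ C := by
    intro r hr h hh
    have hD : D (r • h) = r * D h := by
      rw [ContinuousLinearMap.map_smul]; simp [smul_eq_mul]
    simp only [hCdef, mem_setOf_eq, norm_smul, Real.norm_eq_abs, abs_of_pos hr] at *
    rw [hD]
    nlinarith
  have hCball : ((‖h1‖⁻¹ * (1/2)) • h1) ∈ C ∩ ball 0 1 := by
    have hn : (0:ℝ) < ‖h1‖ := norm_pos_iff.mpr hh1ne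
    constructor
    · exact hCsmul _ (by positivity) _ hh1
    · simp only [mem_ball, dist_zero_right, norm_smul, Real.norm_eq_abs]
      rw [abs_of_pos (by positivity : (0:ℝ) < ‖h1‖⁻¹ * (1/2))]
      rw [mul_comm (‖h1‖⁻¹) (1/2), mul_assoc, inv_mul_cancel₀ hn.ne']
      norm_num
  set m := volume (C ∩ ball (0:EuclideanSpace ℝ (Fin d)) 1) with hmdef
  have hm : 0 < m := (hCopen.inter isOpen_ball).measure_pos volume ⟨_, hCball⟩
  set vB := volume (ball (0:EuclideanSpace ℝ (Fin d)) 1) with hvBdef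
  have hvB0 : vB ≠ 0 := (measure_ball_pos volume _ one_pos).ne'
  have hvBtop : vB ≠ ⊤ := measure_ball_lt_top.ne
  have hm_le : m ≤ vB := measure_mono inter_subset_right
  have hmtop : m ≠ ⊤ := (lt_of_le_of_lt hm_le measure_ball_lt_top).ne
  set β := (vB - m) / vB with hβdef
  have hβlt : β < 1 := by
    rw [hβdef, ENNReal.div_lt_iff (Or.inl hvB0) (Or.inl hvBtop), one_mul]
    exact ENNReal.sub_lt_self hvBtop hvB0 hm.ne'
  -- littleO control
  have hld := hdiff.hasFDerivAt.isLittleO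
  have hev : ∀ᶠ x' in 𝓝 x, ‖v x' - v x - D (x' - x)‖ ≤ ε / 2 * ‖x' - x‖ :=
    hld.def (by positivity)
  obtain ⟨δ, hδpos, hδ⟩ := Metric.eventually_nhds_iff_ball.mp hev
  -- key bound
  have key : ∀ r : ℝ, 0 < r → r < δ →
      volume (E ∩ closedBall x r) / volume (closedBall x r) ≤ β := by
    intro r hr hrδ
    set n := Module.finrank ℝ (EuclideanSpace ℝ (Fin d))
    set c := ENNReal.ofReal (r ^ n) with hcdef
    have hc0 : c ≠ 0 := by
      rw [hcdef, Ne, ENNReal.ofReal_eq_zero, not_le]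
      positivity
    have hctop : c ≠ ⊤ := ENNReal.ofReal_ne_top
    have hBall : volume (closedBall x r) = c * vB := by
      rw [Measure.addHaar_closedBall volume x hr.le]
    -- scaled cone
    have hscale : C ∩ ball 0 r = r • (C ∩ ball (0:EuclideanSpace ℝ (Fin d)) 1) := by
      ext h
      constructor
      · rintro ⟨hC, hb⟩
        refine ⟨r⁻¹ • h, ⟨hCsmul _ (by positivity) _ hC, ?_⟩, ?_⟩
        · simp only [mem_ball, dist_zero_right, norm_smul, Real.norm_eq_abs,
            abs_of_pos (inv_pos.mpr hr)]
          rw [mem_ball, dist_zero_right] at hb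
          rw [inv_mul_lt_iff₀ hr, mul_one]
          exact hb
        · show r • r⁻¹ • h = h
          rw [smul_smul, mul_inv_cancel₀ hr.ne', one_smul]
      · rintro ⟨h', ⟨hC, hb⟩, rfl⟩
        refine ⟨hCsmul _ hr _ hC, ?_⟩
        rw [mem_ball, dist_zero_right] at hb ⊢
        rw [norm_smul, Real.norm_eq_abs, abs_of_pos hr]
        nlinarith [norm_nonneg h']
    have hconemeas : volume (C ∩ ball 0 r) = c * m := by
      rw [hscale, Measure.addHaar_smul, abs_of_pos (by positivity : (0:ℝ) < r ^ n)]
    -- translated cone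
    set A : Set (EuclideanSpace ℝ (Fin d)) := (fun z => z - x) ⁻¹' (C ∩ ball 0 r) with hAdef
    have hAmeas : volume A = c * m := by
      rw [hAdef, show (fun z : EuclideanSpace ℝ (Fin d) => z - x) = (fun z => z + (-x)) by
        funext z; rw [sub_eq_add_neg]]
      rw [measure_preimage_add_right volume (-x) _]
      exact hconemeas
    have hAsub : A ⊆ closedBall x r := by
      intro z hz
      rcases hz with ⟨_, hb⟩
      rw [mem_ball, dist_zero_right] at hb
      rw [mem_closedBall, dist_eq_norm]
      exact hb.le
    have hAdisj : ∀ z ∈ A, z ∉ E := by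
      rintro z ⟨hzC, hzb⟩ hzE
      rw [mem_ball, dist_zero_right] at hzb
      have hzball : z ∈ ball x δ := by
        rw [mem_ball, dist_eq_norm]
        calc ‖z - x‖ < r := hzb
        _ < δ := hrδ
      have := hδ z hzball
      rw [hv0 z hzE, hv0 x hxE] at this
      simp only [sub_zero, zero_sub, norm_neg] at this
      have hC : ε * ‖z - x‖ < D (z - x) := hzC
      have habs : |D (z - x)| ≤ ε / 2 * ‖z - x‖ := by
        simpa [Real.norm_eq_abs] using this
      have h1 : D (z - x) ≤ ε / 2 * ‖z - x‖ := (abs_le.mp habs).2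
      nlinarith [norm_nonneg (z - x)]
    have hsub : E ∩ closedBall x r ⊆ closedBall x r \ A := by
      rintro z ⟨hzE, hzb⟩
      exact ⟨hzb, fun hzA => hAdisj z hzA hzE⟩
    have hAnm : NullMeasurableSet A volume :=
      (((hCopen.inter isOpen_ball).measurableSet).preimage (measurable_id.sub_const x)).nullMeasurableSet
    have hmeasle : volume (E ∩ closedBall x r) ≤ c * vB - c * m := by
      calc volume (E ∩ closedBall x r) ≤ volume (closedBall x r \ A) := measure_mono hsub
        _ = volume (closedBall x r) - volume A :=
            measure_diff hAsub hAnm ((lt_of_le_of_lt (measure_mono hAsub)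
              measure_closedBall_lt_top).ne)
        _ = c * vB - c * m := by rw [hBall, hAmeas]
    calc volume (E ∩ closedBall x r) / volume (closedBall x r)
        ≤ (c * vB - c * m) / (c * vB) := by
          rw [hBall]; exact ENNReal.div_le_div_right hmeasle _
      _ = (c * (vB - m)) / (c * vB) := by rw [ENNReal.mul_sub (fun _ _ => hctop)]
      _ = β := by rw [ENNReal.mul_div_mul_left _ _ hc0 hctop]
  -- contradiction with density 1
  have hev1 : ∀ᶠ r in 𝓝[>] (0:ℝ),
      β < volume (E ∩ closedBall x r) / volume (closedBall x r) :=
    hx.eventually (Ioi_mem_nhds hβlt)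
  have hev2 : ∀ᶠ r in 𝓝[>] (0:ℝ), r ∈ Ioo (0:ℝ) δ :=
    Ioo_mem_nhdsGT_of_mem ⟨le_refl 0, hδpos⟩
  obtain ⟨r, hr1, hr2⟩ := (hev1.and hev2).exists
  exact absurd (key r hr2.1 hr2.2) (not_le.mpr hr1)



lemma gradient_log_smul_ae {d : ℕ} (u : EuclideanSpace ℝ (Fin d) → ℝ)
    (hu_meas : Measurable u) (hu_nonneg : ∀ x, 0 ≤ u x) :
    ∀ᵐ x, 0 < u x →
      u x • gradient (fun x' => Real.log (u x')) x = gradient u x := by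
  set v : EuclideanSpace ℝ (Fin d) → ℝ := fun x' => Real.log (u x') with hvdef
  have hE : MeasurableSet {x | u x = 1} := hu_meas (measurableSet_singleton 1)
  have hv0 : ∀ x ∈ {x | u x = 1}, v x = 0 := by
    intro x hx; simp only [hvdef, mem_setOf_eq] at *; rw [hx, Real.log_one]
  filter_upwards [fderiv_zero_ae_on_level v hE hv0] with x hkey hux
  by_cases hdu : DifferentiableAt ℝ u x
  · -- chain rule case
    have hne : u x ≠ 0 := hux.ne'
    have hlog : HasFDerivAt v ((u x)⁻¹ • fderiv ℝ u x) x := (hdu.hasFDerivAt).log hne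
    rw [gradient, gradient, hlog.fderiv, LinearIsometryEquiv.map_smul, smul_smul,
      mul_inv_cancel₀ hne, one_smul]
  · have hgu : gradient u x = 0 := by
      rw [gradient, fderiv_zero_of_not_differentiableAt hdu, map_zero]
    by_cases hdv : DifferentiableAt ℝ v x
    · -- u not differentiable, v differentiable
      by_cases hev : ∀ᶠ x' in 𝓝 x, u x' ≠ 0
      · exfalso
        apply hdu
        have heq : (fun x' => Real.exp (v x')) =ᶠ[𝓝 x] u := by
          filter_upwards [hev] with x' hx'
          exact Real.exp_log (lt_of_le_of_ne (hu_nonneg x') (Ne.symm hx'))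
        exact hdv.exp.congr_of_eventuallyEq heq.symm
      · have hfreq : ∃ᶠ x' in 𝓝 x, u x' = 0 := by
          rw [Filter.not_eventually] at hev
          exact hev.mono (fun x' hx' => not_ne_iff.mp hx')
        have hvx : v x = 0 := by
          by_contra hvx
          have hvne : ∀ᶠ z in 𝓝 (v x), z ≠ 0 := eventually_ne_nhds hvx
          have := hdv.continuousAt.eventually hvne
          have hf2 : ∃ᶠ x' in 𝓝 x, v x' = 0 := by
            apply hfreq.mono
            intro x' hx'
            simp [hvdef, hx', Real.log_zero]
          exact (hf2.and_eventually this).exists.elim (fun x' ⟨h1, h2⟩ => h2 h1)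
        have hux1 : u x = 1 := by
          rcases (Real.log_eq_zero).mp hvx with h | h | h
          · exact absurd h hux.ne'
          · exact h
          · linarith
        have hfv : fderiv ℝ v x = 0 := hkey hux1 hdv
        rw [hgu, hvdef, gradient, hfv, map_zero, smul_zero]
    · have hgv : gradient v x = 0 := by
        rw [gradient, fderiv_zero_of_not_differentiableAt hdv, map_zero]
      rw [hgu, hgv, smul_zero]


lemma measurable_gradient_param {d e : ℕ} (k : EuclideanSpace ℝ (Fin d) → EuclideanSpace ℝ (Fin e) → ℝ)
    (hk : Measurable (Function.uncurry k)) (x : EuclideanSpace ℝ (Fin d))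
    (hdiff : ∀ x0, DifferentiableAt ℝ (fun x' => k x' x0) x) :
    Measurable (fun x0 => gradient (fun x' => k x' x0) x) := by
  refine (MeasurableEquiv.toLp 2 (Fin d → ℝ)).measurable.comp
    (f := fun x0 => WithLp.ofLp (gradient (fun x' => k x' x0) x)) (measurable_pi_iff.mpr ?_)
  intro i
  set w : EuclideanSpace ℝ (Fin d) := EuclideanSpace.single i (1:ℝ) with hwdef
  have hcoord : ∀ x0, gradient (fun x' => k x' x0) x i =
      fderiv ℝ (fun x' => k x' x0) x w := by
    intro x0
    have h1 : (inner ℝ (gradient (fun x' => k x' x0) x) w : ℝ) =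
        fderiv ℝ (fun x' => k x' x0) x w := by
      rw [gradient]
      exact InnerProductSpace.toDual_symm_apply
    rw [hwdef, EuclideanSpace.inner_single_right] at h1
    simpa using h1
  simp_rw [hcoord]
  -- difference quotients
  set τ : ℕ → ℝ := fun n => ((n:ℝ) + 1)⁻¹ with hτdef
  have hτpos : ∀ n, 0 < τ n := by
    intro n; rw [hτdef]; positivity
  have hτ0 : Tendsto τ atTop (𝓝[≠] (0:ℝ)) := by
    apply tendsto_nhdsWithin_of_tendsto_nhds_of_eventually_within
    · simpa [hτdef, one_div] using tendsto_one_div_add_atTop_nhds_zero_nat (𝕜 := ℝ)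
    · exact Eventually.of_forall fun n => (hτpos n).ne'
  set G : ℕ → EuclideanSpace ℝ (Fin e) → ℝ :=
    fun n x0 => (k (x + τ n • w) x0 - k x x0) / τ n with hGdef
  have hGmeas : ∀ n, Measurable (G n) := by
    intro n
    apply Measurable.div_const
    exact ((hk.comp (measurable_const.prodMk measurable_id)).sub
      (hk.comp (measurable_const.prodMk measurable_id)))
  apply measurable_of_tendsto_metrizable' atTop hGmeas
  rw [tendsto_pi_nhds]
  intro x0
  set φ : ℝ → ℝ := fun τ' => k (x + τ' • w) x0 with hφdef
  have hgline : HasDerivAt (fun τ' : ℝ => x + τ' • w) w 0 := by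
    simpa using ((hasDerivAt_id (0:ℝ)).smul_const w).const_add x
  have hF' : HasFDerivAt (fun x' => k x' x0) (fderiv ℝ (fun x' => k x' x0) x)
      (x + (0:ℝ) • w) := by
    simpa using (hdiff x0).hasFDerivAt
  have hline : HasDerivAt φ (fderiv ℝ (fun x' => k x' x0) x w) 0 :=
    by have h := hF'.comp_hasDerivAt 0 hgline; exact h
  have hslope := hasDerivAt_iff_tendsto_slope.mp hline
  have hcomp := hslope.comp hτ0
  have heq : (fun n => slope φ 0 (τ n)) = fun n => G n x0 := by
    funext n
    rw [slope_def_field, hGdef]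
    simp only [hφdef, zero_smul, add_zero, sub_zero]
  exact heq ▸ hcomp


lemma key_x0_level {d : ℕ}
    (K Q : EuclideanSpace ℝ (Fin d) → ℝ)
    (hK_meas : Measurable K) (hQ_meas : Measurable Q)
    (hK_pos : ∀ x0, 0 < K x0) (hQ_pos : ∀ x0, 0 < Q x0)
    (b g : EuclideanSpace ℝ (Fin d) → EuclideanSpace ℝ (Fin d))
    (hg_meas : Measurable g)
    (hbg : ∀ x0, K x0 • b x0 = g x0)
    (a c Gu : EuclideanSpace ℝ (Fin d))
    (hc : c ≠ 0)
    (hI1 : Integrable (fun x0 => ‖a‖^2 * (K x0 * Q x0)))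
    (hI2 : Integrable (fun x0 => ‖b x0‖^2 * (K x0 * Q x0)))
    (hI3 : Integrable (fun x0 => ‖a - c‖^2 * (K x0 * Q x0)))
    (hI4 : Integrable (fun x0 => ‖b x0 - c‖^2 * (K x0 * Q x0)))
    (hGu : Gu = ∫ x0, Q x0 • g x0)
    (hux : (∫ x0, K x0 * Q x0) • a = Gu) :
    (∫ x0, ‖a - c‖^2 * (K x0 * Q x0)) - (∫ x0, ‖b x0 - c‖^2 * (K x0 * Q x0))
      = (∫ x0, ‖a‖^2 * (K x0 * Q x0)) - (∫ x0, ‖b x0‖^2 * (K x0 * Q x0)) := by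
  have hKQ_meas : Measurable (fun x0 => K x0 * Q x0) := hK_meas.mul hQ_meas
  have hKQ_nonneg : ∀ x0, 0 ≤ K x0 * Q x0 :=
    fun x0 => mul_nonneg (hK_pos x0).le (hQ_pos x0).le
  -- integrability of K * Q
  have hIc : Integrable (fun x0 => ‖c‖^2 * (K x0 * Q x0)) := by
    apply Integrable.mono' ((hI4.add hI2).const_mul 2)
      ((hKQ_meas.const_mul _).aestronglyMeasurable)
    refine Eventually.of_forall fun x0 => ?_
    have hn : ‖c‖ ≤ ‖b x0 - c‖ + ‖b x0‖ := by
      calc ‖c‖ = ‖b x0 - (b x0 - c)‖ := by rw [sub_sub_cancel]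
      _ ≤ ‖b x0‖ + ‖b x0 - c‖ := norm_sub_le _ _
      _ = ‖b x0 - c‖ + ‖b x0‖ := by ring
    rw [Real.norm_eq_abs, abs_of_nonneg (mul_nonneg (sq_nonneg ‖c‖) (hKQ_nonneg x0))]
    have h0 := hKQ_nonneg x0
    simp only [Pi.add_apply]
    have h1 : ‖c‖^2 ≤ 2*‖b x0 - c‖^2 + 2*‖b x0‖^2 := by
      nlinarith [hn, norm_nonneg (b x0 - c), norm_nonneg (b x0), norm_nonneg c,
        sq_nonneg (‖b x0 - c‖ - ‖b x0‖)]
    nlinarith [mul_le_mul_of_nonneg_right h1 h0]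
  have hc2 : (0:ℝ) < ‖c‖^2 := by
    have : 0 < ‖c‖ := norm_pos_iff.mpr hc
    positivity
  have hIk : Integrable (fun x0 => K x0 * Q x0) := by
    have := hIc.const_mul ((‖c‖^2)⁻¹)
    simpa [← mul_assoc, inv_mul_cancel₀ hc2.ne'] using this
  -- integrability of Q • g
  have hIg : Integrable (fun x0 => Q x0 • g x0) := by
    apply Integrable.mono' ((hI2.add hIk).const_mul (1/2))
      ((hQ_meas.smul hg_meas).aestronglyMeasurable)
    refine Eventually.of_forall fun x0 => ?_
    have hgn : ‖g x0‖ = K x0 * ‖b x0‖ := by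
      rw [← hbg x0, norm_smul, Real.norm_eq_abs, abs_of_pos (hK_pos x0)]
    rw [Pi.smul_apply', norm_smul, Real.norm_eq_abs, abs_of_pos (hQ_pos x0), hgn]
    have hK := (hK_pos x0).le
    have hQ := (hQ_pos x0).le
    simp only [Pi.add_apply]
    nlinarith [sq_nonneg (‖b x0‖ - 1), norm_nonneg (b x0),
      mul_nonneg (mul_nonneg hK hQ) (sq_nonneg (‖b x0‖ - 1))]
  -- inner product integrand rewriting
  have hinner_eq : (fun x0 => (inner ℝ (b x0) c : ℝ) * (K x0 * Q x0))
      = fun x0 => (inner ℝ (Q x0 • g x0) c : ℝ) := by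
    funext x0
    rw [real_inner_smul_left, ← hbg x0, real_inner_smul_left]
    ring
  have hIbc : Integrable (fun x0 => (inner ℝ (b x0) c : ℝ) * (K x0 * Q x0)) := by
    rw [hinner_eq]; exact hIg.inner_const c
  have hintbc : (∫ x0, (inner ℝ (b x0) c : ℝ) * (K x0 * Q x0)) = (inner ℝ Gu c : ℝ) := by
    rw [hinner_eq]
    have : (∫ x0, (inner ℝ (Q x0 • g x0) c : ℝ)) = ∫ x0, (inner ℝ c (Q x0 • g x0) : ℝ) := by
      simp_rw [real_inner_comm]
    rw [this, integral_inner hIg c, real_inner_comm, hGu]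
  -- expansions
  set u0 : ℝ := ∫ x0, K x0 * Q x0 with hu0
  have hLHS1 : (∫ x0, ‖a - c‖^2 * (K x0 * Q x0))
      = (∫ x0, ‖a‖^2 * (K x0 * Q x0)) + (-2 * (inner ℝ a c : ℝ) + ‖c‖^2) * u0 := by
    have : (fun x0 => ‖a - c‖^2 * (K x0 * Q x0))
        = fun x0 => ‖a‖^2 * (K x0 * Q x0)
            + (-2 * (inner ℝ a c : ℝ) + ‖c‖^2) * (K x0 * Q x0) := by
      funext x0
      rw [norm_sub_sq_real]
      ring
    have hadd1 : Integrable (fun x0 => (-2 * (inner ℝ a c : ℝ) + ‖c‖^2) * (K x0 * Q x0)) :=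
      hIk.const_mul _
    rw [this, integral_add hI1 hadd1, integral_const_mul, integral_const_mul, hu0]
  have hLHS2 : (∫ x0, ‖b x0 - c‖^2 * (K x0 * Q x0))
      = (∫ x0, ‖b x0‖^2 * (K x0 * Q x0))
          + (-2 * (inner ℝ Gu c : ℝ) + ‖c‖^2 * u0) := by
    have heq2 : (fun x0 => ‖b x0 - c‖^2 * (K x0 * Q x0))
        = fun x0 => ‖b x0‖^2 * (K x0 * Q x0)
            + ((-2 * ((inner ℝ (b x0) c : ℝ) * (K x0 * Q x0))) + ‖c‖^2 * (K x0 * Q x0)) := by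
      funext x0
      rw [norm_sub_sq_real]
      ring
    have haddA : Integrable (fun x0 => -2 * ((inner ℝ (b x0) c : ℝ) * (K x0 * Q x0))) :=
      hIbc.const_mul _
    have haddB : Integrable (fun x0 =>
        -2 * ((inner ℝ (b x0) c : ℝ) * (K x0 * Q x0)) + ‖c‖^2 * (K x0 * Q x0)) :=
      haddA.add hIc
    rw [heq2, integral_add hI2 haddB, integral_add haddA hIc, integral_const_mul,
      integral_const_mul, hintbc]
  have hfinal : (inner ℝ Gu c : ℝ) = u0 * (inner ℝ a c : ℝ) := by
    rw [← hux, real_inner_smul_left]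
  rw [hLHS1, hLHS2, hfinal]
  ring


lemma integrable_KQ {d : ℕ}
    (K Q : EuclideanSpace ℝ (Fin d) → ℝ)
    (hK_meas : Measurable K) (hQ_meas : Measurable Q)
    (hK_pos : ∀ x0, 0 < K x0) (hQ_pos : ∀ x0, 0 < Q x0)
    (b : EuclideanSpace ℝ (Fin d) → EuclideanSpace ℝ (Fin d))
    (c : EuclideanSpace ℝ (Fin d)) (hc : c ≠ 0)
    (hI2 : Integrable (fun x0 => ‖b x0‖^2 * (K x0 * Q x0)))
    (hI4 : Integrable (fun x0 => ‖b x0 - c‖^2 * (K x0 * Q x0))) :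
    Integrable (fun x0 => K x0 * Q x0) := by
  have hKQ_meas : Measurable (fun x0 => K x0 * Q x0) := hK_meas.mul hQ_meas
  have hKQ_nonneg : ∀ x0, 0 ≤ K x0 * Q x0 :=
    fun x0 => mul_nonneg (hK_pos x0).le (hQ_pos x0).le
  have hIc : Integrable (fun x0 => ‖c‖^2 * (K x0 * Q x0)) := by
    apply Integrable.mono' ((hI4.add hI2).const_mul 2)
      ((hKQ_meas.const_mul _).aestronglyMeasurable)
    refine Eventually.of_forall fun x0 => ?_
    have hn : ‖c‖ ≤ ‖b x0 - c‖ + ‖b x0‖ := by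
      calc ‖c‖ = ‖b x0 - (b x0 - c)‖ := by rw [sub_sub_cancel]
      _ ≤ ‖b x0‖ + ‖b x0 - c‖ := norm_sub_le _ _
      _ = ‖b x0 - c‖ + ‖b x0‖ := by ring
    rw [Real.norm_eq_abs, abs_of_nonneg (mul_nonneg (sq_nonneg ‖c‖) (hKQ_nonneg x0))]
    have h0 := hKQ_nonneg x0
    simp only [Pi.add_apply]
    have h1 : ‖c‖^2 ≤ 2*‖b x0 - c‖^2 + 2*‖b x0‖^2 := by
      nlinarith [hn, norm_nonneg (b x0 - c), norm_nonneg (b x0), norm_nonneg c,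
        sq_nonneg (‖b x0 - c‖ - ‖b x0‖)]
    nlinarith [mul_le_mul_of_nonneg_right h1 h0]
  have hc2 : (0:ℝ) < ‖c‖^2 := by
    have : 0 < ‖c‖ := norm_pos_iff.mpr hc
    positivity
  have := hIc.const_mul ((‖c‖^2)⁻¹)
  simpa [← mul_assoc, inv_mul_cancel₀ hc2.ne'] using this


/-- Iterated integrability over `(0,T] × ℝ^m × ℝ^d × ℝ^d` of a time-indexed,
`λ`-weighted integrand, expressing that "all integrals below are finite". -/
def IterIntegrable (d m : ℕ) (T : ℝ) (lam : ℝ → ℝ)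
    (F : ℝ → EuclideanSpace ℝ (Fin m) → EuclideanSpace ℝ (Fin d) →
      EuclideanSpace ℝ (Fin d) → ℝ) : Prop :=
  (∀ t ∈ Set.Ioc (0:ℝ) T, ∀ y x, Integrable (fun x0 => F t y x x0)) ∧
  (∀ t ∈ Set.Ioc (0:ℝ) T, ∀ y, Integrable (fun x => ∫ x0, F t y x x0)) ∧
  (∀ t ∈ Set.Ioc (0:ℝ) T, Integrable (fun y => ∫ x, ∫ x0, F t y x x0)) ∧
  IntegrableOn (fun t => lam t * ∫ y, ∫ x, ∫ x0, F t y x x0) (Set.Ioc 0 T)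

/-- The `λ`-weighted loss `∫_0^T λ(t) ∭ F(t,y,x,x₀) dx₀ dx dy dt`. -/
def weightedLoss (d m : ℕ) (T : ℝ) (lam : ℝ → ℝ)
    (F : ℝ → EuclideanSpace ℝ (Fin m) → EuclideanSpace ℝ (Fin d) →
      EuclideanSpace ℝ (Fin d) → ℝ) : ℝ :=
  ∫ t in Set.Ioc (0:ℝ) T, lam t * ∫ y, ∫ x, ∫ x0, F t y x x0

/-- The integrand of the conditional score-matching loss `L_CDE`:
`‖∇_x log p_t(x,y) − s(x,y,t)‖² k_t(x,x₀) p₀(x₀,y)`. -/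
def cdeIntegrand (d m : ℕ)
    (p : ℝ → EuclideanSpace ℝ (Fin d) → EuclideanSpace ℝ (Fin m) → ℝ)
    (k : ℝ → EuclideanSpace ℝ (Fin d) → EuclideanSpace ℝ (Fin d) → ℝ)
    (p0 : EuclideanSpace ℝ (Fin d) → EuclideanSpace ℝ (Fin m) → ℝ)
    (s : EuclideanSpace ℝ (Fin d) → EuclideanSpace ℝ (Fin m) → ℝ →
      EuclideanSpace ℝ (Fin d))
    (t : ℝ) (y : EuclideanSpace ℝ (Fin m)) (x x0 : EuclideanSpace ℝ (Fin d)) : ℝ :=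
  ‖gradient (fun x' => Real.log (p t x' y)) x - s x y t‖ ^ 2 * (k t x x0 * p0 x0 y)

/-- The integrand of the denoising score-matching loss `L_DSM`:
`‖∇_x log k_t(x,x₀) − s(x,y,t)‖² k_t(x,x₀) p₀(x₀,y)`. -/
def dsmIntegrand (d m : ℕ)
    (k : ℝ → EuclideanSpace ℝ (Fin d) → EuclideanSpace ℝ (Fin d) → ℝ)
    (p0 : EuclideanSpace ℝ (Fin d) → EuclideanSpace ℝ (Fin m) → ℝ)
    (s : EuclideanSpace ℝ (Fin d) → EuclideanSpace ℝ (Fin m) → ℝ →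
      EuclideanSpace ℝ (Fin d))
    (t : ℝ) (y : EuclideanSpace ℝ (Fin m)) (x x0 : EuclideanSpace ℝ (Fin d)) : ℝ :=
  ‖gradient (fun x' => Real.log (k t x' x0)) x - s x y t‖ ^ 2 * (k t x x0 * p0 x0 y)

/-- **Theorem 1 (conditional denoising score matching).** Under the stated
assumptions on the joint density `p₀`, the transition densities `k_t`, the
perturbed densities `p_t(x,y) = ∫ k_t(x,x₀) p₀(x₀,y) dx₀`, and the validity of
differentiation under the integral sign, the difference `L_CDE(s) − L_DSM(s)`
is independent of `s`: for every measurable `s` with finite losses,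
`L_CDE(s) − L_DSM(s) = L_CDE(0) − L_DSM(0)`. -/
theorem conditional_denoising_score_matching_equivalence
    (d m : ℕ) (T : ℝ) (hT : 0 < T)
    (lam : ℝ → ℝ) (hlam_meas : Measurable lam)
    (hlam_nonneg : ∀ t ∈ Set.Icc (0:ℝ) T, 0 ≤ lam t)
    (p0 : EuclideanSpace ℝ (Fin d) → EuclideanSpace ℝ (Fin m) → ℝ)
    (hp0_meas : Measurable (Function.uncurry p0))
    (hp0_pos : ∀ x0 y, 0 < p0 x0 y)
    (hp0_prob : ∫ x0, ∫ y, p0 x0 y = 1)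
    (k : ℝ → EuclideanSpace ℝ (Fin d) → EuclideanSpace ℝ (Fin d) → ℝ)
    (hk_meas : ∀ t ∈ Set.Ioc (0:ℝ) T, Measurable (Function.uncurry (k t)))
    (hk_pos : ∀ t ∈ Set.Ioc (0:ℝ) T, ∀ x x0, 0 < k t x x0)
    (hk_prob : ∀ t ∈ Set.Ioc (0:ℝ) T, ∀ x0, ∫ x, k t x x0 = 1)
    (hk_diff : ∀ t ∈ Set.Ioc (0:ℝ) T, ∀ x0,
      Differentiable ℝ (fun x => k t x x0))
    (p : ℝ → EuclideanSpace ℝ (Fin d) → EuclideanSpace ℝ (Fin m) → ℝ)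
    (hp_def : ∀ t ∈ Set.Ioc (0:ℝ) T, ∀ x y, p t x y = ∫ x0, k t x x0 * p0 x0 y)
    (hp_grad : ∀ t ∈ Set.Ioc (0:ℝ) T, ∀ x y,
      gradient (fun x' => p t x' y) x =
        ∫ x0, p0 x0 y • gradient (fun x' => k t x' x0) x)
    (hzero_cde : IterIntegrable d m T lam
      (cdeIntegrand d m p k p0 (fun _ _ _ => 0)))
    (hzero_dsm : IterIntegrable d m T lam
      (dsmIntegrand d m k p0 (fun _ _ _ => 0))) :
    ∀ s : EuclideanSpace ℝ (Fin d) → EuclideanSpace ℝ (Fin m) → ℝ →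
        EuclideanSpace ℝ (Fin d),
      Measurable (fun q : EuclideanSpace ℝ (Fin d) × EuclideanSpace ℝ (Fin m) × ℝ =>
        s q.1 q.2.1 q.2.2) →
      IterIntegrable d m T lam (cdeIntegrand d m p k p0 s) →
      IterIntegrable d m T lam (dsmIntegrand d m k p0 s) →
      weightedLoss d m T lam (cdeIntegrand d m p k p0 s) -
          weightedLoss d m T lam (dsmIntegrand d m k p0 s) =
        weightedLoss d m T lam (cdeIntegrand d m p k p0 (fun _ _ _ => 0)) -
          weightedLoss d m T lam (dsmIntegrand d m k p0 (fun _ _ _ => 0)) := by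
  intro s hs_meas hs_cde hs_dsm
  obtain ⟨hc1, hc2, hc3, hc4⟩ := hs_cde
  obtain ⟨hd1, hd2, hd3, hd4⟩ := hs_dsm
  obtain ⟨hz1, hz2, hz3, hz4⟩ := hzero_cde
  obtain ⟨hw1, hw2, hw3, hw4⟩ := hzero_dsm
  have hty : ∀ t ∈ Set.Ioc (0:ℝ) T, ∀ y,
      (∫ x, ∫ x0, cdeIntegrand d m p k p0 s t y x x0)
        - (∫ x, ∫ x0, dsmIntegrand d m k p0 s t y x x0)
      = (∫ x, ∫ x0, cdeIntegrand d m p k p0 (fun _ _ _ => 0) t y x x0)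
        - (∫ x, ∫ x0, dsmIntegrand d m k p0 (fun _ _ _ => 0) t y x x0) := by
    intro t ht y
    have hKQunc : Measurable (Function.uncurry
        fun x x0 : EuclideanSpace ℝ (Fin d) => k t x x0 * p0 x0 y) := by
      apply Measurable.mul
      · exact hk_meas t ht
      · exact hp0_meas.comp (measurable_snd.prodMk measurable_const)
    have hu_meas : Measurable (fun x => p t x y) := by
      have h1 : Measurable fun x => ∫ x0, k t x x0 * p0 x0 y :=
        (hKQunc.stronglyMeasurable.integral_prod_right').measurable
      have h2 : (fun x => p t x y) = fun x => ∫ x0, k t x x0 * p0 x0 y := by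
        funext x; exact hp_def t ht x y
      rw [h2]; exact h1
    have hu_nonneg : ∀ x, 0 ≤ p t x y := by
      intro x; rw [hp_def t ht x y]
      exact integral_nonneg fun x0 => mul_nonneg (hk_pos t ht x x0).le (hp0_pos x0 y).le
    have hae := gradient_log_smul_ae (fun x => p t x y) hu_meas hu_nonneg
    have hInn : ∀ᵐ x : EuclideanSpace ℝ (Fin d),
        (∫ x0, cdeIntegrand d m p k p0 s t y x x0)
          - (∫ x0, dsmIntegrand d m k p0 s t y x x0)
        = (∫ x0, cdeIntegrand d m p k p0 (fun _ _ _ => 0) t y x x0)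
          - (∫ x0, dsmIntegrand d m k p0 (fun _ _ _ => 0) t y x x0) := by
      filter_upwards [hae] with x hx
      by_cases hc0 : s x y t = 0
      · have e1 : (fun x0 => cdeIntegrand d m p k p0 s t y x x0)
            = fun x0 => cdeIntegrand d m p k p0 (fun _ _ _ => 0) t y x x0 := by
          funext x0; simp [cdeIntegrand, hc0]
        have e2 : (fun x0 => dsmIntegrand d m k p0 s t y x x0)
            = fun x0 => dsmIntegrand d m k p0 (fun _ _ _ => 0) t y x x0 := by
          funext x0; simp [dsmIntegrand, hc0]
        rw [e1, e2]
      · have hK_meas : Measurable (fun x0 => k t x x0) :=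
          (hk_meas t ht).comp (measurable_const.prodMk measurable_id)
        have hQ_meas : Measurable (fun x0 => p0 x0 y) :=
          hp0_meas.comp (measurable_id.prodMk measurable_const)
        have hg_meas : Measurable (fun x0 => gradient (fun x' => k t x' x0) x) :=
          measurable_gradient_param (k t) (hk_meas t ht) x (fun x0 => hk_diff t ht x0 x)
        have hbg : ∀ x0, (k t x x0) • gradient (fun x' => Real.log (k t x' x0)) x
            = gradient (fun x' => k t x' x0) x := by
          intro x0
          have hlog : HasFDerivAt (fun x' => Real.log (k t x' x0))
              ((k t x x0)⁻¹ • fderiv ℝ (fun x' => k t x' x0) x) x :=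
            ((hk_diff t ht x0 x).hasFDerivAt).log (hk_pos t ht x x0).ne'
          rw [gradient, gradient, hlog.fderiv, LinearIsometryEquiv.map_smul, smul_smul,
            mul_inv_cancel₀ (hk_pos t ht x x0).ne', one_smul]
        have hI1 := hz1 t ht y x
        have hI2 := hw1 t ht y x
        have hI3 := hc1 t ht y x
        have hI4 := hd1 t ht y x
        simp only [cdeIntegrand, dsmIntegrand, sub_zero] at hI1 hI2 hI3 hI4
        have hIk : Integrable (fun x0 => k t x x0 * p0 x0 y) :=
          integrable_KQ (fun x0 => k t x x0) (fun x0 => p0 x0 y) hK_meas hQ_meas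
            (fun x0 => hk_pos t ht x x0) (fun x0 => hp0_pos x0 y)
            (fun x0 => gradient (fun x' => Real.log (k t x' x0)) x) (s x y t) hc0 hI2 hI4
        have hupos : 0 < p t x y := by
          rw [hp_def t ht x y]
          rw [integral_pos_iff_support_of_nonneg
            (fun x0 => mul_nonneg (hk_pos t ht x x0).le (hp0_pos x0 y).le) hIk]
          have hsupp : Function.support (fun x0 => k t x x0 * p0 x0 y) = Set.univ := by
            ext x0
            simp only [Function.mem_support, Set.mem_univ, iff_true]
            exact (mul_pos (hk_pos t ht x x0) (hp0_pos x0 y)).ne'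
          rw [hsupp]
          exact IsOpen.measure_pos volume isOpen_univ ⟨0, trivial⟩
        have hux : (∫ x0, k t x x0 * p0 x0 y) •
              gradient (fun x' => Real.log (p t x' y)) x
            = gradient (fun x' => p t x' y) x := by
          have h := hx hupos
          rw [hp_def t ht x y] at h
          exact h
        have hGu := hp_grad t ht x y
        have hkey := key_x0_level (fun x0 => k t x x0) (fun x0 => p0 x0 y) hK_meas hQ_meas
          (fun x0 => hk_pos t ht x x0) (fun x0 => hp0_pos x0 y)
          (fun x0 => gradient (fun x' => Real.log (k t x' x0)) x)
          (fun x0 => gradient (fun x' => k t x' x0) x) hg_meas hbg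
          (gradient (fun x' => Real.log (p t x' y)) x) (s x y t)
          (gradient (fun x' => p t x' y) x) hc0 hI1 hI2 hI3 hI4 hGu hux
        simp only [cdeIntegrand, dsmIntegrand, sub_zero]
        exact hkey
    have h1 : (∫ x, ((∫ x0, cdeIntegrand d m p k p0 s t y x x0)
          - (∫ x0, dsmIntegrand d m k p0 s t y x x0)))
        = ∫ x, ((∫ x0, cdeIntegrand d m p k p0 (fun _ _ _ => 0) t y x x0)
          - (∫ x0, dsmIntegrand d m k p0 (fun _ _ _ => 0) t y x x0)) :=
      integral_congr_ae hInn
    rwa [integral_sub (hc2 t ht y) (hd2 t ht y),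
      integral_sub (hz2 t ht y) (hw2 t ht y)] at h1
  have hts : ∀ t ∈ Set.Ioc (0:ℝ) T,
      (∫ y, ∫ x, ∫ x0, cdeIntegrand d m p k p0 s t y x x0)
        - (∫ y, ∫ x, ∫ x0, dsmIntegrand d m k p0 s t y x x0)
      = (∫ y, ∫ x, ∫ x0, cdeIntegrand d m p k p0 (fun _ _ _ => 0) t y x x0)
        - (∫ y, ∫ x, ∫ x0, dsmIntegrand d m k p0 (fun _ _ _ => 0) t y x x0) := by
    intro t ht
    have h1 : (∫ y, ((∫ x, ∫ x0, cdeIntegrand d m p k p0 s t y x x0)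
          - (∫ x, ∫ x0, dsmIntegrand d m k p0 s t y x x0)))
        = ∫ y, ((∫ x, ∫ x0, cdeIntegrand d m p k p0 (fun _ _ _ => 0) t y x x0)
          - (∫ x, ∫ x0, dsmIntegrand d m k p0 (fun _ _ _ => 0) t y x x0)) :=
      integral_congr_ae (Filter.Eventually.of_forall fun y => hty t ht y)
    rwa [integral_sub (hc3 t ht) (hd3 t ht), integral_sub (hz3 t ht) (hw3 t ht)] at h1
  simp only [weightedLoss]
  rw [← integral_sub hc4 hd4, ← integral_sub hz4 hw4]
  apply setIntegral_congr_fun measurableSet_Ioc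
  intro t ht
  have h := hts t ht
  simp only []
  linear_combination (lam t) * h

end
end

section
/- Let α : ℝ → ℝ be continuous with α ≥ 0, and for a ≤ b write ᾱ(a,b) = ∫_a^b α(z) dz. For a ≤ b and x₀ ∈ ℝ define the transition measure K_{a,b}(x₀) = gaussianReal (x₀ · exp(−ᾱ(a,b))) (1 − exp(−2ᾱ(a,b))), a Gaussian measure on ℝ. Then the family satisfies the Chapman–Kolmogorov (semigroup) consistency: for all τ ≤ s ≤ t and all x₀ ∈ ℝ, the convolution of the pushforward of K_{τ,s}(x₀) under the map y ↦ exp(−ᾱ(s,t)) · y with the Gaussian measure gaussianReal 0 (1 − exp(−2ᾱ(s,t))) equals K_{τ,t}(x₀). -/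
open MeasureTheory ProbabilityTheory

open Real

namespace CKaux

open scoped ENNReal NNReal

/-- Convolution of two densities wrt Lebesgue. -/
lemma conv_withDensity (f g : ℝ → ℝ≥0∞) (hf : Measurable f) (hg : Measurable g) :
    Measure.conv ((volume : Measure ℝ).withDensity f) (volume.withDensity g)
      = volume.withDensity (fun u => ∫⁻ x, f x * g (u - x)) := by
  ext s hs
  rw [Measure.conv, Measure.map_apply measurable_add hs,
    withDensity_apply _ hs, Measure.prod_apply (measurable_add hs)]
  have key : ∀ x : ℝ, (volume.withDensity g) (Prod.mk x ⁻¹' ((fun p : ℝ × ℝ => p.1 + p.2) ⁻¹' s))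
      = ∫⁻ u, g (u - x) * s.indicator 1 u := by
    intro x
    have hpre : (Prod.mk x ⁻¹' ((fun p : ℝ × ℝ => p.1 + p.2) ⁻¹' s)) = (fun y => x + y) ⁻¹' s := rfl
    rw [hpre]
    have hmeas : MeasurableSet ((fun y => x + y) ⁻¹' s) := (measurable_const_add x) hs
    rw [withDensity_apply _ hmeas]
    have hmp : Measure.map (fun y => x + y) (volume : Measure ℝ) = volume :=
      (measurePreserving_add_left volume x).map_eq
    have hmeasF : Measurable fun u : ℝ => g (u - x) * s.indicator 1 u :=
      ((hg.comp (measurable_id.sub measurable_const)).mul (measurable_one.indicator hs) :)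
    calc ∫⁻ y in (fun y => x + y) ⁻¹' s, g y ∂volume
        = ∫⁻ y, Set.indicator ((fun y => x + y) ⁻¹' s) g y ∂volume := by
          rw [lintegral_indicator hmeas]
      _ = ∫⁻ y, (fun u => g (u - x) * s.indicator 1 u) ((fun y => x + y) y) ∂volume := by
          congr 1; funext y
          by_cases hy : x + y ∈ s <;>
            simp [Set.indicator, hy, Set.mem_preimage]
      _ = ∫⁻ u, g (u - x) * s.indicator 1 u ∂volume := by
          rw [← lintegral_map hmeasF (measurable_const_add x), hmp]
  simp_rw [key]
  rw [lintegral_withDensity_eq_lintegral_mul volume hf]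
  swap
  · apply Measurable.lintegral_prod_right (f := fun x u => g (u - x) * s.indicator 1 u)
    exact ((hg.comp (measurable_snd.sub measurable_fst)).mul
      ((measurable_one.indicator hs).comp measurable_snd) :)
  have step : ∀ x : ℝ, ((fun x => f x) * fun x => ∫⁻ u, g (u - x) * s.indicator 1 u) x
      = ∫⁻ u, f x * g (u - x) * s.indicator 1 u := by
    intro x
    simp only [Pi.mul_apply]
    have hgx : Measurable fun u : ℝ => g (u - x) * s.indicator 1 u := by
      exact (hg.comp (measurable_id.sub measurable_const)).mul (measurable_one.indicator hs)
    rw [← lintegral_const_mul _ hgx]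
    congr 1; funext u; ring
  simp_rw [step]
  rw [lintegral_lintegral_swap]
  swap
  · exact ((((hf.comp measurable_fst).mul
      (hg.comp (measurable_snd.sub measurable_fst))).mul
      ((measurable_one.indicator hs).comp measurable_snd) :)
        : Measurable fun p : ℝ × ℝ => f p.1 * g (p.2 - p.1) * s.indicator 1 p.2).aemeasurable
  calc ∫⁻ u, ∫⁻ x, f x * g (u - x) * s.indicator 1 u ∂volume ∂volume
      = ∫⁻ u, (∫⁻ x, f x * g (u - x)) * s.indicator 1 u ∂volume := by
        congr 1; funext u
        have hfu : Measurable fun x : ℝ => f x * g (u - x) := by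
          exact hf.mul (hg.comp (measurable_const.sub measurable_id))
        rw [lintegral_mul_const _ hfu]
    _ = ∫⁻ u, s.indicator (fun u => ∫⁻ x, f x * g (u - x)) u ∂volume := by
        congr 1; funext u
        by_cases hu : u ∈ s <;> simp [Set.indicator, hu]
    _ = ∫⁻ u in s, ∫⁻ x, f x * g (u - x) ∂volume := lintegral_indicator hs _

lemma gaussianPDFReal_le (v : ℝ≥0) (m y : ℝ) :
    gaussianPDFReal m v y ≤ (Real.sqrt (2 * π * v))⁻¹ := by
  rw [gaussianPDFReal]
  have h1 : rexp (-(y - m) ^ 2 / (2 * v)) ≤ 1 := by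
    rw [Real.exp_le_one_iff]
    apply div_nonpos_of_nonpos_of_nonneg
    · simp [sq_nonneg]
    · positivity
  calc (Real.sqrt (2 * π * v))⁻¹ * rexp (-(y - m) ^ 2 / (2 * v))
      ≤ (Real.sqrt (2 * π * v))⁻¹ * 1 := by
        apply mul_le_mul_of_nonneg_left h1; positivity
    _ = _ := mul_one _

/-- Convolution identity for the real Gaussian pdfs. -/
lemma integral_gaussianPDFReal_conv (m x : ℝ) {v w : ℝ≥0} (hv : v ≠ 0) (hw : w ≠ 0) :
    ∫ t, gaussianPDFReal m v t * gaussianPDFReal 0 w (x - t)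
      = gaussianPDFReal m (v + w) x := by
  have hv' : (0 : ℝ) < v := by positivity
  have hw' : (0 : ℝ) < w := by positivity
  set a : ℝ := ((v:ℝ) + w) / (2 * v * w) with ha_def
  have ha : 0 < a := by positivity
  set c : ℝ := ((w:ℝ) * m + v * x) / ((v:ℝ) + w) with hc_def
  have hsum : (0:ℝ) < (v:ℝ) + w := by positivity
  have hexp : ∀ t : ℝ, - (t - m)^2 / (2 * (v:ℝ)) + (- (x - t - 0)^2 / (2 * (w:ℝ)))
      = -a * (t - c)^2 + (- (x - m)^2 / (2 * ((v:ℝ) + w))) := by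
    intro t
    rw [ha_def, hc_def]
    field_simp
    ring
  have hrw : ∀ t : ℝ, gaussianPDFReal m v t * gaussianPDFReal 0 w (x - t)
      = ((Real.sqrt (2 * π * (v:ℝ)))⁻¹ * (Real.sqrt (2 * π * (w:ℝ)))⁻¹
          * rexp (- (x - m)^2 / (2 * ((v:ℝ) + w)))) * rexp (-a * (t - c)^2) := by
    intro t
    rw [gaussianPDFReal, gaussianPDFReal]
    calc (Real.sqrt (2 * π * (v:ℝ)))⁻¹ * rexp (-(t - m) ^ 2 / (2 * (v:ℝ)))
          * ((Real.sqrt (2 * π * (w:ℝ)))⁻¹ * rexp (-(x - t - 0) ^ 2 / (2 * (w:ℝ))))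
        = (Real.sqrt (2 * π * (v:ℝ)))⁻¹ * (Real.sqrt (2 * π * (w:ℝ)))⁻¹
          * rexp (-(t - m) ^ 2 / (2 * (v:ℝ)) + -(x - t - 0) ^ 2 / (2 * (w:ℝ))) := by
          rw [Real.exp_add]; ring
      _ = _ := by rw [hexp t, Real.exp_add]; ring
  calc ∫ t, gaussianPDFReal m v t * gaussianPDFReal 0 w (x - t)
      = ∫ t, ((Real.sqrt (2 * π * (v:ℝ)))⁻¹ * (Real.sqrt (2 * π * (w:ℝ)))⁻¹
          * rexp (- (x - m)^2 / (2 * ((v:ℝ) + w)))) * rexp (-a * (t - c)^2) := by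
        congr 1; funext t; exact hrw t
    _ = ((Real.sqrt (2 * π * (v:ℝ)))⁻¹ * (Real.sqrt (2 * π * (w:ℝ)))⁻¹
          * rexp (- (x - m)^2 / (2 * ((v:ℝ) + w)))) * ∫ t, rexp (-a * (t - c)^2) := by
        rw [integral_const_mul]
    _ = ((Real.sqrt (2 * π * (v:ℝ)))⁻¹ * (Real.sqrt (2 * π * (w:ℝ)))⁻¹
          * rexp (- (x - m)^2 / (2 * ((v:ℝ) + w)))) * Real.sqrt (π / a) := by
        rw [show (∫ t, rexp (-a * (t - c)^2)) = ∫ t, rexp (-a * t^2) from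
          integral_sub_right_eq_self (fun t => rexp (-a * t^2)) c, integral_gaussian]
    _ = gaussianPDFReal m (v + w) x := by
        rw [gaussianPDFReal]
        have hconst : (Real.sqrt (2 * π * (v:ℝ)))⁻¹ * (Real.sqrt (2 * π * (w:ℝ)))⁻¹
            * Real.sqrt (π / a) = (Real.sqrt (2 * π * ((v:ℝ) + w)))⁻¹ := by
          rw [← Real.sqrt_inv, ← Real.sqrt_inv, ← Real.sqrt_mul (by positivity),
            ← Real.sqrt_mul (by positivity), ← Real.sqrt_inv]
          congr 1
          rw [ha_def]
          field_simp
        push_cast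
        rw [← hconst]
        ring

end CKaux

namespace CKaux

open scoped ENNReal NNReal

lemma lintegral_gaussianPDF_conv (m x : ℝ) {v w : ℝ≥0} (hv : v ≠ 0) (hw : w ≠ 0) :
    ∫⁻ t, gaussianPDF m v t * gaussianPDF 0 w (x - t) = gaussianPDF m (v + w) x := by
  have hmeas : Measurable fun t : ℝ => gaussianPDFReal 0 w (x - t) :=
    (measurable_gaussianPDFReal 0 w).comp (measurable_const.sub measurable_id)
  have hint : Integrable (fun t => gaussianPDFReal 0 w (x - t) * gaussianPDFReal m v t) :=
    (integrable_gaussianPDFReal m v).bdd_mul hmeas.aestronglyMeasurable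
      (c := (Real.sqrt (2 * π * w))⁻¹) (ae_of_all _ fun t => by
        rw [Real.norm_eq_abs, abs_of_nonneg (gaussianPDFReal_nonneg _ _ _)]
        exact gaussianPDFReal_le w 0 (x - t))
  have hint' : Integrable (fun t => gaussianPDFReal m v t * gaussianPDFReal 0 w (x - t)) := by
    simpa [mul_comm] using hint
  calc ∫⁻ t, gaussianPDF m v t * gaussianPDF 0 w (x - t)
      = ∫⁻ t, ENNReal.ofReal (gaussianPDFReal m v t * gaussianPDFReal 0 w (x - t)) := by
        congr 1; funext t
        simp only [gaussianPDF_def]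
        rw [← ENNReal.ofReal_mul (gaussianPDFReal_nonneg _ _ _)]
    _ = ENNReal.ofReal (∫ t, gaussianPDFReal m v t * gaussianPDFReal 0 w (x - t)) :=
        (ofReal_integral_eq_lintegral_ofReal hint'
          (ae_of_all _ fun t => mul_nonneg (gaussianPDFReal_nonneg _ _ _)
            (gaussianPDFReal_nonneg _ _ _))).symm
    _ = gaussianPDF m (v + w) x := by
        rw [integral_gaussianPDFReal_conv m x hv hw]; rfl

lemma gaussianReal_conv (m : ℝ) (v w : ℝ≥0) :
    Measure.conv (gaussianReal m v) (gaussianReal 0 w) = gaussianReal m (v + w) := by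
  by_cases hw : w = 0
  · subst hw
    rw [add_zero, gaussianReal_zero_var]
    exact Measure.conv_dirac_zero _
  by_cases hv : v = 0
  · subst hv
    rw [zero_add, gaussianReal_zero_var, Measure.conv, Measure.dirac_prod,
      Measure.map_map measurable_add measurable_prodMk_left]
    have : ((fun p : ℝ × ℝ => p.1 + p.2) ∘ Prod.mk m) = fun y => m + y := rfl
    rw [this, gaussianReal_map_const_add, zero_add]
  have hvw : v + w ≠ 0 := fun h => hv ((add_eq_zero.mp h).1)
  rw [gaussianReal_of_var_ne_zero _ hv, gaussianReal_of_var_ne_zero _ hw,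
    gaussianReal_of_var_ne_zero _ hvw,
    conv_withDensity _ _ (measurable_gaussianPDF m v) (measurable_gaussianPDF 0 w)]
  congr 1
  funext u
  exact lintegral_gaussianPDF_conv m u hv hw

end CKaux



/-- **Chapman–Kolmogorov consistency of the mean-reverting transition kernels.**
For continuous nonnegative `α`, `ᾱ(a,b) = ∫_a^b α(z) dz`, and transition
measures `K_{a,b}(x₀) = gaussianReal (x₀ e^{-ᾱ(a,b)}) (1 - e^{-2ᾱ(a,b)})`,
for all `τ ≤ s ≤ t` and `x₀`, the convolution of the pushforward of
`K_{τ,s}(x₀)` under `y ↦ e^{-ᾱ(s,t)} y` with `gaussianReal 0 (1 - e^{-2ᾱ(s,t)})`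
equals `K_{τ,t}(x₀)`. -/
theorem meanReverting_chapman_kolmogorov
    (α : ℝ → ℝ) (hα : Continuous α) (hα_nonneg : ∀ z, 0 ≤ α z)
    (K : ℝ → ℝ → ℝ → Measure ℝ)
    (hK : ∀ a b : ℝ, a ≤ b → ∀ x₀ : ℝ,
      K a b x₀ = gaussianReal (x₀ * Real.exp (-∫ z in a..b, α z))
        (Real.toNNReal (1 - Real.exp (-2 * ∫ z in a..b, α z)))) :
    ∀ τ s t : ℝ, τ ≤ s → s ≤ t → ∀ x₀ : ℝ,
      Measure.conv
        (Measure.map (fun y => Real.exp (-∫ z in s..t, α z) * y) (K τ s x₀))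
        (gaussianReal 0 (Real.toNNReal (1 - Real.exp (-2 * ∫ z in s..t, α z))))
        = K τ t x₀ := by
  intro τ s t hτs hst x₀
  rw [hK τ s hτs x₀, hK τ t (hτs.trans hst) x₀]
  set A := ∫ z in τ..s, α z with hA_def
  set B := ∫ z in s..t, α z with hB_def
  have hAB : A + B = ∫ z in τ..t, α z :=
    intervalIntegral.integral_add_adjacent_intervals
      (hα.intervalIntegrable _ _) (hα.intervalIntegrable _ _)
  have hA0 : 0 ≤ A := intervalIntegral.integral_nonneg hτs fun u _ => hα_nonneg u
  have hB0 : 0 ≤ B := intervalIntegral.integral_nonneg hst fun u _ => hα_nonneg u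
  rw [← hAB, gaussianReal_map_const_mul, CKaux.gaussianReal_conv]
  have h1 : (0:ℝ) ≤ 1 - rexp (-2 * A) := by
    have : rexp (-2 * A) ≤ 1 := by rw [Real.exp_le_one_iff]; linarith
    linarith
  have h2 : (0:ℝ) ≤ 1 - rexp (-2 * B) := by
    have : rexp (-2 * B) ≤ 1 := by rw [Real.exp_le_one_iff]; linarith
    linarith
  have h3 : (0:ℝ) ≤ 1 - rexp (-2 * (A + B)) := by
    have : rexp (-2 * (A + B)) ≤ 1 := by rw [Real.exp_le_one_iff]; nlinarith
    linarith
  congr 1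
  · rw [show -(A + B) = -A + -B by ring, Real.exp_add]; ring
  · apply NNReal.coe_injective
    rw [NNReal.coe_add, NNReal.coe_mul, Real.coe_toNNReal _ h1, Real.coe_toNNReal _ h2,
      Real.coe_toNNReal _ h3, NNReal.coe_mk]
    rw [show (-2 * (A + B)) = (-2 * A) + (-2 * B) by ring, Real.exp_add,
      show (-2 * B) = -B + -B by ring, Real.exp_add,
      show (-2 * A) = -A + -A by ring, Real.exp_add, sq]
    ring
end
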